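/- Let Δ₁,…,Δₙ be convex polytopes in ℝⁿ in generic relative position and χ : Δ → ℝⁿ a characteristic map on the Minkowski sum Δ. Then χ⁻¹(0) is exactly the set of vertices of Δ. -/

import Mathlib

open Pointwise

/-- A (nonempty) convex polytope in ℝⁿ: the convex hull of a nonempty finite set. -/
def IsPolytope {n : ℕ} (P : Set (Fin n → ℝ)) : Prop :=
  ∃ S : Finset (Fin n → ℝ), S.Nonempty ∧ P = convexHull ℝ (S : Set (Fin n → ℝ))

/-- The face of `P` on which the linear functional `ξ` attains its minimum. -/
def minFace {n : ℕ} (ξ : (Fin n → ℝ) →ₗ[ℝ] ℝ) (P : Set (Fin n → ℝ)) :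
    Set (Fin n → ℝ) :=
  {x ∈ P | ∀ y ∈ P, ξ x ≤ ξ y}

/-- `F` is a face of the polytope `P`. -/
def IsFaceOf {n : ℕ} (F P : Set (Fin n → ℝ)) : Prop :=
  ∃ ξ : (Fin n → ℝ) →ₗ[ℝ] ℝ, F = minFace ξ P

/-- Generic relative position: for every nonzero linear functional, some minimizing
face is a vertex. -/
def GenericPosition {n : ℕ} (Δ : Fin n → Set (Fin n → ℝ)) : Prop :=
  ∀ ξ : (Fin n → ℝ) →ₗ[ℝ] ℝ, ξ ≠ 0 → ∃ i v, minFace ξ (Δ i) = {v}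

/-- The `i`-th summand of the face `Γ` of the Minkowski sum `Δ₁ + ⋯ + Δₙ` (in the
unique decomposition of `Γ` into faces of the `Δⱼ`) is a vertex. -/
def SummandIsVertex {n : ℕ} (Δ : Fin n → Set (Fin n → ℝ)) (i : Fin n)
    (Γ : Set (Fin n → ℝ)) : Prop :=
  ∃ G : Fin n → Set (Fin n → ℝ),
    (∀ j, IsFaceOf (G j) (Δ j)) ∧ Γ = ∑ j, G j ∧ ∃ v, G i = {v}

/-- A characteristic map for the tuple `Δ₁,…,Δₙ`: a continuous map on the Minkowski
sum `Δ` with nonnegative components, whose `i`-th component vanishes precisely on the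
faces of `Δ` whose `i`-th summand is a vertex. -/
def IsCharacteristic {n : ℕ} (Δ : Fin n → Set (Fin n → ℝ))
    (χ : (Fin n → ℝ) → (Fin n → ℝ)) : Prop :=
  ContinuousOn χ (∑ j, Δ j) ∧
  (∀ x ∈ ∑ j, Δ j, ∀ i, 0 ≤ χ x i) ∧
  ∀ i, ∀ x ∈ ∑ j, Δ j,
    (χ x i = 0 ↔ ∃ Γ, IsFaceOf Γ (∑ j, Δ j) ∧ SummandIsVertex Δ i Γ ∧ x ∈ Γ)

open Bornology Filter in
/-- Rådström-type cancellation: if `F + M ⊆ G + M` with `G` closed convex and `M`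
nonempty bounded, then `F ⊆ G`. -/
lemma radstrom_cancel {E : Type*} [NormedAddCommGroup E] [NormedSpace ℝ E]
    {F G M : Set E} (hG : Convex ℝ G) (hGc : IsClosed G)
    (hM : M.Nonempty) (hMb : IsBounded M)
    (h : F + M ⊆ G + M) : F ⊆ G := by
  intro x hx
  have step : ∀ m, m ∈ M → ∃ g m', g ∈ G ∧ m' ∈ M ∧ x + m = g + m' := by
    intro m hm
    have hmem : x + m ∈ G + M := h (Set.add_mem_add hx hm)
    rcases Set.mem_add.1 hmem with ⟨g, hg, m', hm', he⟩
    exact ⟨g, m', hg, hm', he.symm⟩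
  choose gf mf hgf hmf hef using step
  obtain ⟨m0, hm0⟩ := hM
  let seq : ℕ → {y : E // y ∈ M} := fun k =>
    Nat.rec ⟨m0, hm0⟩ (fun _ p => ⟨mf p.1 p.2, hmf p.1 p.2⟩) k
  let gs : ℕ → E := fun k => gf (seq k).1 (seq k).2
  have hgsG : ∀ k, gs k ∈ G := fun k => hgf _ _
  have hrec : ∀ k, x + (seq k).1 = gs k + (seq (k + 1)).1 := fun k => hef _ _
  have htel : ∀ N : ℕ, ∑ k ∈ Finset.range N, gs k = (N : ℝ) • x + m0 - (seq N).1 := by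
    intro N
    induction N with
    | zero => simp [seq]
    | succ N ih =>
        rw [Finset.sum_range_succ, ih]
        push_cast
        rw [add_smul, one_smul]
        have hgsN : gs N = x + (seq N).1 - (seq (N + 1)).1 := by
          rw [hrec N]; abel
        rw [hgsN]; abel
  set c : ℕ → E := fun N => ((N : ℝ))⁻¹ • ∑ k ∈ Finset.range N, gs k with hc
  have hcG : ∀ N : ℕ, 1 ≤ N → c N ∈ G := by
    intro N hN
    have hN0 : (N : ℝ) ≠ 0 := Nat.cast_ne_zero.2 (by omega)
    have := hG.sum_mem (t := Finset.range N) (w := fun _ => (N : ℝ)⁻¹)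
      (fun i _ => by positivity)
      (by simp [Finset.sum_const, Finset.card_range]; field_simp)
      (fun i _ => hgsG i)
    simpa [hc, Finset.smul_sum] using this
  obtain ⟨C, hC⟩ := hMb.exists_norm_le
  have hC0 : 0 ≤ C := le_trans (norm_nonneg _) (hC m0 hm0)
  have hceq : ∀ N : ℕ, 1 ≤ N → c N = x + ((N : ℝ))⁻¹ • (m0 - (seq N).1) := by
    intro N hN
    have hN0 : (N : ℝ) ≠ 0 := Nat.cast_ne_zero.2 (by omega)
    rw [hc]
    simp only [htel N]
    rw [sub_eq_add_neg, smul_add, smul_add, smul_neg, smul_smul,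
      inv_mul_cancel₀ hN0, one_smul]
    module
  have hten : Tendsto c atTop (nhds x) := by
    have h0 : Tendsto (fun N : ℕ => ((N : ℝ))⁻¹ • (m0 - (seq N).1)) atTop (nhds (0 : E)) := by
      refine squeeze_zero_norm (f := fun N : ℕ => ((N : ℝ))⁻¹ • (m0 - (seq N).1))
        (a := fun N : ℕ => ((N : ℝ))⁻¹ * (2 * C)) (fun N => ?_) ?_
      · rw [norm_smul, Real.norm_eq_abs, abs_inv, Nat.abs_cast]
        refine mul_le_mul_of_nonneg_left ?_ (by positivity)
        calc ‖m0 - (seq N).1‖ ≤ ‖m0‖ + ‖(seq N).1‖ := norm_sub_le _ _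
          _ ≤ C + C := add_le_add (hC m0 hm0) (hC _ (seq N).2)
          _ = 2 * C := by ring
      · have : Tendsto (fun N : ℕ => ((N : ℝ))⁻¹) atTop (nhds 0) :=
          tendsto_inv_atTop_zero.comp tendsto_natCast_atTop_atTop
        simpa using this.mul_const (2 * C)
    have := h0.const_add x
    rw [add_zero] at this
    apply this.congr'
    filter_upwards [eventually_ge_atTop 1] with N hN
    exact (hceq N hN).symm
  exact hGc.mem_of_tendsto hten (by filter_upwards [eventually_ge_atTop 1] with N hN using hcG N hN)

lemma minFace_subset {n : ℕ} (ξ : (Fin n → ℝ) →ₗ[ℝ] ℝ) (P : Set (Fin n → ℝ)) :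
    minFace ξ P ⊆ P := fun _ hx => hx.1

lemma IsPolytope.nonempty {n : ℕ} {P : Set (Fin n → ℝ)} (hP : IsPolytope P) :
    P.Nonempty := by
  obtain ⟨S, hS, rfl⟩ := hP
  exact (Finset.coe_nonempty.2 hS).mono (subset_convexHull ℝ _)

lemma IsPolytope.isCompact {n : ℕ} {P : Set (Fin n → ℝ)} (hP : IsPolytope P) :
    IsCompact P := by
  obtain ⟨S, hS, rfl⟩ := hP
  exact S.finite_toSet.isCompact_convexHull ℝ

lemma minFace_nonempty {n : ℕ} {P : Set (Fin n → ℝ)} (hP : IsPolytope P)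
    (ξ : (Fin n → ℝ) →ₗ[ℝ] ℝ) : (minFace ξ P).Nonempty := by
  obtain ⟨x, hx, hmin⟩ :=
    hP.isCompact.exists_isMinOn hP.nonempty
      (LinearMap.continuous_of_finiteDimensional ξ).continuousOn
  exact ⟨x, hx, fun y hy => hmin hy⟩

/-- Any decomposition of a point of `minFace ξ (∑ Δⱼ)` has all summands minimizing. -/
lemma summand_mem_minFace {n : ℕ} {ξ : (Fin n → ℝ) →ₗ[ℝ] ℝ}
    {Δ : Fin n → Set (Fin n → ℝ)} {g : Fin n → (Fin n → ℝ)}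
    (hg : ∀ j, g j ∈ Δ j) (hx : (∑ j, g j) ∈ minFace ξ (∑ j, Δ j)) (j : Fin n) :
    g j ∈ minFace ξ (Δ j) := by
  refine ⟨hg j, fun y hy => ?_⟩
  have hmem : (∑ k, Function.update g j y k) ∈ ∑ k, Δ k := by
    refine Set.finset_sum_mem_finset_sum _ _ _ (fun k _ => ?_)
    rcases eq_or_ne k j with rfl | hk
    · simpa using hy
    · rw [Function.update_of_ne hk]; exact hg k
  have hupd : ∑ k, Function.update g j y k = y + ∑ k ∈ Finset.univ \ {j}, g k :=
    Finset.sum_update_of_mem (Finset.mem_univ j) _ _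
  have hsplit : ∑ k, g k = g j + ∑ k ∈ Finset.univ \ {j}, g k := by
    rw [← Finset.erase_eq]
    exact (Finset.add_sum_erase _ g (Finset.mem_univ j)).symm
  have hle := hx.2 _ hmem
  rw [hupd, hsplit, map_add, map_add] at hle
  exact le_of_add_le_add_right hle

/-- `minFace` distributes over Minkowski sums. -/
lemma minFace_sum {n : ℕ} (ξ : (Fin n → ℝ) →ₗ[ℝ] ℝ) (Δ : Fin n → Set (Fin n → ℝ)) :
    minFace ξ (∑ j, Δ j) = ∑ j, minFace ξ (Δ j) := by
  ext x
  constructor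
  · intro hx
    obtain ⟨g, hg, hgx⟩ := (Set.mem_fintype_sum _ _).1 hx.1
    subst hgx
    exact Set.finset_sum_mem_finset_sum _ _ _
      (fun j _ => summand_mem_minFace (fun j => hg j) hx j)
  · intro hx
    obtain ⟨g, hg, hgx⟩ := (Set.mem_fintype_sum _ _).1 hx
    subst hgx
    refine ⟨Set.finset_sum_mem_finset_sum _ _ _ (fun j _ => (hg j).1), fun y hy => ?_⟩
    obtain ⟨h, hh, hhy⟩ := (Set.mem_fintype_sum _ _).1 hy
    subst hhy
    rw [map_sum, map_sum]
    exact Finset.sum_le_sum (fun j _ => (hg j).2 _ (hh j))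

lemma isBounded_finsetSum {E : Type*} [NormedAddCommGroup E] {ι : Type*}
    (s : Finset ι) (A : ι → Set E) (h : ∀ i ∈ s, Bornology.IsBounded (A i)) :
    Bornology.IsBounded (∑ i ∈ s, A i) := by
  classical
  induction s using Finset.induction_on with
  | empty =>
      rw [Finset.sum_empty, ← Set.singleton_zero]
      exact Bornology.isBounded_singleton
  | @insert i s hi ih =>
      rw [Finset.sum_insert hi]
      exact (h i (Finset.mem_insert_self i s)).add
        (ih (fun j hj => h j (Finset.mem_insert_of_mem hj)))

/-- Uniqueness of the vertex summand: if a face of the Minkowski sum decomposes with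
`i`-th summand a vertex `{v}`, then the canonical `i`-th summand is also `{v}`. -/
lemma minFace_eq_singleton_of_decomp {n : ℕ} {Δ : Fin n → Set (Fin n → ℝ)}
    (hΔ : ∀ j, IsPolytope (Δ j)) {ξ : (Fin n → ℝ) →ₗ[ℝ] ℝ}
    {G : Fin n → Set (Fin n → ℝ)} (hGf : ∀ j, IsFaceOf (G j) (Δ j))
    (hsum : minFace ξ (∑ j, Δ j) = ∑ j, G j) {i : Fin n} {v : Fin n → ℝ}
    (hGi : G i = {v}) : minFace ξ (Δ i) = {v} := by
  classical
  set F : Fin n → Set (Fin n → ℝ) := fun j => minFace ξ (Δ j) with hF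
  have hGsub : ∀ j, G j ⊆ Δ j := by
    intro j
    obtain ⟨η, hη⟩ := hGf j
    rw [hη]; exact minFace_subset _ _
  have hGne : ∀ j, (G j).Nonempty := by
    intro j
    obtain ⟨η, hη⟩ := hGf j
    rw [hη]; exact minFace_nonempty (hΔ j) η
  choose w hw using hGne
  -- every summand of the decomposition lies in the canonical face
  have hGF : ∀ j, G j ⊆ F j := by
    intro j g hg
    have hmem : (∑ k, Function.update w j g k) ∈ ∑ k, G k := by
      refine Set.finset_sum_mem_finset_sum _ _ _ (fun k _ => ?_)
      rcases eq_or_ne k j with rfl | hk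
      · simpa using hg
      · rw [Function.update_of_ne hk]; exact hw k
    rw [← hsum] at hmem
    have := summand_mem_minFace (g := Function.update w j g)
      (fun k => by
        rcases eq_or_ne k j with rfl | hk
        · simpa using hGsub k hg
        · rw [Function.update_of_ne hk]; exact hGsub k (hw k)) hmem j
    simpa using this
  have hvF : v ∈ F i := hGF i (by rw [hGi]; exact rfl)
  -- cancellation
  have hFsum : ∑ j, F j = ∑ j, G j := by rw [hF, ← minFace_sum, hsum]
  set M : Set (Fin n → ℝ) := ∑ j ∈ Finset.univ.erase i, F j with hM
  have hFiM : F i + M = ∑ j, F j := Finset.add_sum_erase _ F (Finset.mem_univ i)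
  have hGiM : (∑ j, G j) ⊆ {v} + M := by
    rw [← Finset.add_sum_erase Finset.univ G (Finset.mem_univ i), hGi]
    exact Set.add_subset_add_left
      (Set.finset_sum_subset_finset_sum _ _ _ (fun j _ => hGF j))
  have hcancel : F i ⊆ {v} := by
    refine radstrom_cancel (M := M) (convex_singleton v) isClosed_singleton ?_ ?_ ?_
    · choose u hu using fun j => minFace_nonempty (hΔ j) ξ
      exact ⟨∑ j ∈ Finset.univ.erase i, u j,
        Set.finset_sum_mem_finset_sum _ _ _ (fun j _ => hu j)⟩
    · exact isBounded_finsetSum _ _ (fun j _ =>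
        ((hΔ j).isCompact.isBounded).subset (minFace_subset _ _))
    · rw [hFiM, hFsum]; exact hGiM
  exact Set.Subset.antisymm hcancel (Set.singleton_subset_iff.2 hvF)

/-- For polytopes in generic relative position, the zero set of a characteristic map
on the Minkowski sum `Δ` is exactly the set of vertices of `Δ`. -/
theorem characteristic_map_zero_set {n : ℕ}
    (Δ : Fin n → Set (Fin n → ℝ)) (hΔ : ∀ i, IsPolytope (Δ i))
    (hgen : GenericPosition Δ)
    (χ : (Fin n → ℝ) → (Fin n → ℝ)) (hχ : IsCharacteristic Δ χ) :
    {x ∈ ∑ j, Δ j | χ x = 0} = {v | IsFaceOf {v} (∑ j, Δ j)} := by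
  classical
  obtain ⟨hcont, hnn, hzero⟩ := hχ
  ext x
  simp only [Set.mem_setOf_eq]
  constructor
  · rintro ⟨hxΔ, hx0⟩
    -- for each i, obtain a functional whose min face on Δ i is a vertex and whose
    -- min face on the sum contains x
    have H : ∀ i, ∃ ξ : (Fin n → ℝ) →ₗ[ℝ] ℝ, (∃ v, minFace ξ (Δ i) = {v}) ∧
        x ∈ minFace ξ (∑ j, Δ j) := by
      intro i
      have hxi : χ x i = 0 := by rw [hx0]; rfl
      obtain ⟨Γ, ⟨ξ, rfl⟩, ⟨G, hGf, hΓsum, v, hGi⟩, hxΓ⟩ := (hzero i x hxΔ).1 hxi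
      exact ⟨ξ, ⟨v, minFace_eq_singleton_of_decomp hΔ hGf hΓsum hGi⟩, hxΓ⟩
    choose ξ hvert hxm using H
    obtain ⟨g, hgΔ, hgx⟩ := (Set.mem_fintype_sum _ _).1 hxΔ
    -- each summand minimizes every ξ i
    have hgmin : ∀ i j, g j ∈ minFace (ξ i) (Δ j) := by
      intro i j
      refine summand_mem_minFace (fun j => hgΔ j) ?_ j
      rw [hgx]; exact hxm i
    have hgv : ∀ j, minFace (ξ j) (Δ j) = {g j} := by
      intro j
      obtain ⟨v, hv⟩ := hvert j
      have := hgmin j j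
      rw [hv] at this ⊢
      rw [Set.mem_singleton_iff] at this
      rw [this]
    set ζ : (Fin n → ℝ) →ₗ[ℝ] ℝ := ∑ i, ξ i with hζ
    have hζapp : ∀ y, ζ y = ∑ i, ξ i y := by
      intro y; rw [hζ]; simp
    -- g j is the unique minimizer of ζ on Δ j
    have hζj : ∀ j, minFace ζ (Δ j) = {g j} := by
      intro j
      apply Set.Subset.antisymm
      · intro z hz
        -- ζ z ≤ ζ (g j) and ξ i (g j) ≤ ξ i z for each i forces equality
        have hle : ∀ i, ξ i (g j) ≤ ξ i z := fun i => (hgmin i j).2 z hz.1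
        have hge : ζ z ≤ ζ (g j) := hz.2 _ (hgΔ j)
        have heq : ξ j z ≤ ξ j (g j) := by
          by_contra hcon
          push_neg at hcon
          have : ζ (g j) < ζ z := by
            rw [hζapp, hζapp]
            exact Finset.sum_lt_sum (fun i _ => hle i) ⟨j, Finset.mem_univ j, hcon⟩
          exact absurd hge (not_le.2 this)
        have : z ∈ minFace (ξ j) (Δ j) :=
          ⟨hz.1, fun y hy => le_trans heq ((hgmin j j).2 y hy)⟩
        rw [hgv j] at this
        exact this
      · intro z hz
        rw [Set.mem_singleton_iff] at hz
        subst hz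
        refine ⟨hgΔ j, fun y hy => ?_⟩
        rw [hζapp, hζapp]
        exact Finset.sum_le_sum (fun i _ => (hgmin i j).2 y hy)
    refine ⟨ζ, ?_⟩
    rw [minFace_sum]
    have : ∑ j, minFace ζ (Δ j) = ∑ j, ({g j} : Set (Fin n → ℝ)) :=
      Finset.sum_congr rfl (fun j _ => hζj j)
    rw [this, Set.finset_sum_singleton, hgx]
  · rintro ⟨ξ, hface⟩
    have hxmem : x ∈ minFace ξ (∑ j, Δ j) := by rw [← hface]; exact rfl
    have hxΔ : x ∈ ∑ j, Δ j := hxmem.1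
    have hB : minFace ξ (∑ j, Δ j) = ∑ j, minFace ξ (Δ j) := minFace_sum ξ Δ
    choose w hw using fun j => minFace_nonempty (hΔ j) ξ
    have hwx : ∑ j, w j = x := by
      have : (∑ j, w j) ∈ minFace ξ (∑ j, Δ j) := by
        rw [hB]; exact Set.finset_sum_mem_finset_sum _ _ _ (fun j _ => hw j)
      rw [← hface] at this
      exact this
    have hsing : ∀ j, minFace ξ (Δ j) = {w j} := by
      intro j
      apply Set.Subset.antisymm
      · intro z hz
        have hmem : (∑ k, Function.update w j z k) ∈ minFace ξ (∑ k, Δ k) := by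
          rw [hB]
          refine Set.finset_sum_mem_finset_sum _ _ _ (fun k _ => ?_)
          rcases eq_or_ne k j with rfl | hk
          · simpa using hz
          · rw [Function.update_of_ne hk]; exact hw k
        rw [← hface, Set.mem_singleton_iff] at hmem
        have hsumw : ∑ k, Function.update w j z k
            = z + ∑ k ∈ Finset.univ \ {j}, w k :=
          Finset.sum_update_of_mem (Finset.mem_univ j) _ _
        have hsumw' : ∑ k, w k = w j + ∑ k ∈ Finset.univ \ {j}, w k := by
          rw [← Finset.erase_eq]
          exact (Finset.add_sum_erase _ w (Finset.mem_univ j)).symm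
        rw [← hwx, hsumw'] at hmem
        rw [hsumw] at hmem
        have := add_right_cancel hmem
        rw [this]; rfl
      · intro z hz
        rw [Set.mem_singleton_iff] at hz
        subst hz
        exact hw j
    refine ⟨hxΔ, funext fun i => ?_⟩
    have : χ x i = 0 := by
      refine (hzero i x hxΔ).2 ⟨{x}, ⟨ξ, hface⟩, ?_, rfl⟩
      exact ⟨fun j => minFace ξ (Δ j), fun j => ⟨ξ, rfl⟩,
        by rw [← hB, ← hface], w i, hsing i⟩
    simpa using this
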